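/- For every integer m ≥ 1 there exists a polynomial F of degree m-1 with rational coefficients such that for all integers n ≥ 1, Σ_{i=1}^n i^{2m+1} = S_1^2 · F(S_1), where S_1 = n(n+1)/2. -/

import Mathlib

open Polynomial Finset

lemma pow_diff (x : ℚ) (M : ℕ) :
    x^M * ((x+1)^M - (x-1)^M)
      = ∑ k ∈ Finset.range (M+1), (M.choose k : ℚ) * (1 - (-1)^(M-k)) * x^(M+k) := by
  rw [sub_eq_add_neg x 1, add_pow, add_pow, ← Finset.sum_sub_distrib, Finset.mul_sum]
  refine Finset.sum_congr rfl fun k hk => ?_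
  rw [pow_add]
  ring

lemma tele (m n : ℕ) :
    ((n:ℚ)*((n:ℚ)+1))^(m+1)
      = ∑ k ∈ Finset.range (m+2), ((m+1).choose k : ℚ) * (1 - (-1)^(m+1-k)) *
          ∑ i ∈ Finset.Icc 1 n, (i:ℚ)^(m+1+k) := by
  induction n with
  | zero => simp
  | succ n ih =>
    have key := pow_diff ((n:ℚ)+1) (m+1)
    have step : ∀ k ∈ Finset.range (m+2),
        ((m+1).choose k : ℚ) * (1 - (-1)^(m+1-k)) * ∑ i ∈ Finset.Icc 1 (n+1), (i:ℚ)^(m+1+k)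
        = ((m+1).choose k : ℚ) * (1 - (-1)^(m+1-k)) * ∑ i ∈ Finset.Icc 1 n, (i:ℚ)^(m+1+k)
          + ((m+1).choose k : ℚ) * (1 - (-1)^(m+1-k)) * ((n:ℚ)+1)^(m+1+k) := by
      intro k _
      rw [Finset.sum_Icc_succ_top (by omega : 1 ≤ n+1)]
      push_cast
      ring
    rw [Finset.sum_congr rfl step, Finset.sum_add_distrib, ← ih, ← key]
    push_cast [mul_pow]
    ring

lemma faulhaber_aux : ∀ m : ℕ, 1 ≤ m → ∃ F : Polynomial ℚ, F.natDegree = m - 1 ∧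
      ∀ n : ℕ, 1 ≤ n →
        (∑ i ∈ Finset.Icc 1 n, (i : ℚ) ^ (2 * m + 1)) =
          ((n : ℚ) * (n + 1) / 2) ^ 2 * F.eval ((n : ℚ) * (n + 1) / 2) := by
  intro m
  induction m using Nat.strong_induction_on with
  | _ m IH =>
    intro hm
    classical
    set s : Finset ℕ := (Finset.range m).filter (fun k => ¬ Even (m+1-k)) with hs
    set F' : ℕ → Polynomial ℚ :=
      fun t => if h : t < m ∧ 1 ≤ t then (IH t h.1 h.2).choose else 0 with hF'
    have hF'deg : ∀ t, t < m → 1 ≤ t → (F' t).natDegree = t - 1 := by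
      intro t h1 h2
      simp only [hF', dif_pos (show t < m ∧ 1 ≤ t from ⟨h1, h2⟩)]
      exact (IH t h1 h2).choose_spec.1
    have hF'eval : ∀ t, t < m → 1 ≤ t → ∀ n : ℕ, 1 ≤ n →
        (∑ i ∈ Finset.Icc 1 n, (i : ℚ) ^ (2 * t + 1)) =
          ((n : ℚ) * (n + 1) / 2) ^ 2 * (F' t).eval ((n : ℚ) * (n + 1) / 2) := by
      intro t h1 h2
      simp only [hF', dif_pos (show t < m ∧ 1 ≤ t from ⟨h1, h2⟩)]
      exact (IH t h1 h2).choose_spec.2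
    refine ⟨Polynomial.C ((m:ℚ)+1)⁻¹ * (Polynomial.C (2^m : ℚ) * Polynomial.X^(m-1)
      - ∑ k ∈ s, Polynomial.C (((m+1).choose k : ℚ)) * F' ((m+k)/2)), ?_, ?_⟩
    · -- degree
      have hinv : ((m:ℚ)+1)⁻¹ ≠ 0 := by positivity
      rw [Polynomial.natDegree_C_mul hinv]
      rcases eq_or_lt_of_le hm with h1 | h2
      · have hsempty : s = ∅ := by rw [hs]; subst h1; decide
        rw [hsempty]
        simp [← h1]
      · have hQ : (∑ k ∈ s,
            Polynomial.C (((m+1).choose k : ℚ)) * F' ((m+k)/2)).natDegree ≤ m - 2 := by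
          refine Polynomial.natDegree_sum_le_of_forall_le _ _ fun k hk => ?_
          rw [hs, Finset.mem_filter, Finset.mem_range] at hk
          obtain ⟨hk1, hk2⟩ := hk
          rw [Nat.not_even_iff] at hk2
          have ht1 : 1 ≤ (m+k)/2 := by omega
          have ht2 : (m+k)/2 < m := by omega
          refine le_trans (Polynomial.natDegree_C_mul_le _ _) ?_
          rw [hF'deg _ ht2 ht1]
          omega
        have hX : (Polynomial.C (2^m : ℚ) * Polynomial.X^(m-1)).natDegree = m - 1 := by
          rw [Polynomial.natDegree_C_mul (by positivity : (2^m : ℚ) ≠ 0),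
            Polynomial.natDegree_X_pow]
        rw [Polynomial.natDegree_sub_eq_left_of_natDegree_lt, hX]
        rw [hX]
        omega
    · -- eval identity
      intro n hn
      set S : ℚ := (n:ℚ) * ((n:ℚ)+1) / 2 with hSdef
      have hA := tele m n
      rw [Finset.sum_range_succ, Finset.sum_range_succ] at hA
      have hz : ((m+1).choose (m+1) : ℚ) * (1 - (-1)^(m+1-(m+1))) *
          ∑ i ∈ Finset.Icc 1 n, (i:ℚ)^(m+1+(m+1)) = 0 := by
        simp
      have hmain : ((m+1).choose m : ℚ) * (1 - (-1)^(m+1-m)) *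
          ∑ i ∈ Finset.Icc 1 n, (i:ℚ)^(m+1+m)
          = 2 * ((m:ℚ)+1) * ∑ i ∈ Finset.Icc 1 n, (i:ℚ)^(2*m+1) := by
        have h1 : m + 1 - m = 1 := by omega
        have h2 : m + 1 + m = 2*m+1 := by omega
        rw [h1, h2, Nat.choose_succ_self_right]
        push_cast
        ring
      rw [hz, hmain, add_zero] at hA
      have hfilter : ∑ k ∈ Finset.range m, ((m+1).choose k : ℚ) * (1 - (-1)^(m+1-k)) *
            ∑ i ∈ Finset.Icc 1 n, (i:ℚ)^(m+1+k)
          = ∑ k ∈ s, ((m+1).choose k : ℚ) * (1 - (-1)^(m+1-k)) *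
            ∑ i ∈ Finset.Icc 1 n, (i:ℚ)^(m+1+k) := by
        rw [hs]
        refine (Finset.sum_filter_of_ne ?_).symm
        intro k _ hne heven
        apply hne
        rw [heven.neg_one_pow]
        simp
      rw [hfilter] at hA
      have hsplit : ∀ k ∈ s, ((m+1).choose k : ℚ) * (1 - (-1)^(m+1-k)) *
            ∑ i ∈ Finset.Icc 1 n, (i:ℚ)^(m+1+k)
          = 2 * (((m+1).choose k : ℚ) * (S^2 * (F' ((m+k)/2)).eval S)) := by
        intro k hk
        rw [hs, Finset.mem_filter, Finset.mem_range] at hk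
        obtain ⟨hk1, hk2⟩ := hk
        rw [Nat.not_even_iff] at hk2
        have hexpo : m+1+k = 2*((m+k)/2)+1 := by omega
        have h1 : 1 ≤ (m+k)/2 := by omega
        have h2 : (m+k)/2 < m := by omega
        have hodd : Odd (m+1-k) := Nat.odd_iff.mpr hk2
        rw [hexpo, hF'eval _ h2 h1 n hn, hodd.neg_one_pow]
        ring
      rw [Finset.sum_congr rfl hsplit] at hA
      have hS2 : (n:ℚ) * ((n:ℚ)+1) = 2 * S := by rw [hSdef]; ring
      rw [hS2, mul_pow] at hA
      have hB : ∑ k ∈ s, 2 * (((m+1).choose k : ℚ) * (S^2 * (F' ((m+k)/2)).eval S))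
          = 2 * (S^2 * ∑ k ∈ s, ((m+1).choose k : ℚ) * (F' ((m+k)/2)).eval S) := by
        rw [Finset.mul_sum, Finset.mul_sum]
        refine Finset.sum_congr rfl fun k _ => by ring
      rw [hB] at hA
      have hpow : S^2 * S^(m-1) = S^(m+1) := by
        rw [← pow_add]
        congr 1
        omega
      have hm1 : (m:ℚ) + 1 ≠ 0 := by positivity
      simp only [Polynomial.eval_mul, Polynomial.eval_C, Polynomial.eval_sub,
        Polynomial.eval_pow, Polynomial.eval_X, Polynomial.eval_finset_sum]
      field_simp
      linear_combination (-1/2) * hA - 2^m * hpow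

theorem faulhaber_odd (m : ℕ) (hm : 1 ≤ m) :
    ∃ F : Polynomial ℚ, F.natDegree = m - 1 ∧
      ∀ n : ℕ, 1 ≤ n →
        (∑ i ∈ Finset.Icc 1 n, (i : ℚ) ^ (2 * m + 1)) =
          ((n : ℚ) * (n + 1) / 2) ^ 2 * F.eval ((n : ℚ) * (n + 1) / 2) := by
  exact faulhaber_aux m hm
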